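/- arXiv:0801.1966 — 4 statements merged into one kernel-verified Lean document; each statement's English description precedes it below -/
import Mathlib

section
/- Let L be a coherent lower prevision on all gambles on a nonempty set X and let 𝒯 be a monoid of transformations of X. Then L is strongly 𝒯-invariant (L(f − f∘T) ≥ 0 and L(f∘T − f) ≥ 0 for every gamble f and T ∈ 𝒯) if and only if every coherent prevision P ∈ 𝓜(L) satisfies P(1_{T⁻¹(A)}) = P(1_A) for every subset A ⊆ X and every T ∈ 𝒯, where 1_A denotes the indicator gamble of A. -/
def IsGamble {X : Type*} (f : X → ℝ) : Prop :=
  BddAbove (Set.range f) ∧ BddBelow (Set.range f)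

def IsCoherentLowerPrevision {X : Type*} (L : (X → ℝ) → ℝ) : Prop :=
  (∀ f : X → ℝ, IsGamble f → sInf (Set.range f) ≤ L f) ∧
  (∀ f g : X → ℝ, IsGamble f → IsGamble g → L f + L g ≤ L (f + g)) ∧
  (∀ f : X → ℝ, IsGamble f → ∀ c : ℝ, 0 ≤ c → L (c • f) = c * L f)

def IsCoherentPrevision {X : Type*} (P : (X → ℝ) → ℝ) : Prop :=
  (∀ f g : X → ℝ, IsGamble f → IsGamble g → P (f + g) = P f + P g) ∧
  (∀ f : X → ℝ, IsGamble f → sInf (Set.range f) ≤ P f)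

def IsTransformationMonoid {X : Type*} (𝒯 : Set (X → X)) : Prop :=
  id ∈ 𝒯 ∧ ∀ S ∈ 𝒯, ∀ T ∈ 𝒯, S ∘ T ∈ 𝒯

def Dominating {X : Type*} (L : (X → ℝ) → ℝ) : Set ((X → ℝ) → ℝ) :=
  {P | IsCoherentPrevision P ∧ ∀ f : X → ℝ, IsGamble f → L f ≤ P f}

section Aux
variable {X : Type*}

lemma isGamble_of_bound {f : X → ℝ} {C : ℝ} (h : ∀ x, |f x| ≤ C) : IsGamble f :=
  ⟨⟨C, by rintro y ⟨x, rfl⟩; exact (abs_le.1 (h x)).2⟩,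
   ⟨-C, by rintro y ⟨x, rfl⟩; exact (abs_le.1 (h x)).1⟩⟩

lemma isGamble_bound {f : X → ℝ} (h : IsGamble f) : ∃ C, ∀ x, |f x| ≤ C := by
  obtain ⟨⟨a, ha⟩, ⟨b, hb⟩⟩ := h
  refine ⟨max a (-b), fun x => abs_le.2 ⟨?_, ?_⟩⟩
  · have h1 := hb ⟨x, rfl⟩
    have h2 := le_max_right a (-b)
    linarith
  · exact le_trans (ha ⟨x, rfl⟩) (le_max_left _ _)

lemma isGamble_indicator (A : Set X) : IsGamble (Set.indicator A (fun _ => (1:ℝ))) :=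
  isGamble_of_bound (C := 1) fun x => by
    by_cases hx : x ∈ A <;> simp [Set.indicator_apply, hx]

lemma isGamble_const (c : ℝ) : IsGamble (fun _ : X => c) :=
  isGamble_of_bound (C := |c|) fun _ => le_rfl

lemma isGamble_comp {f : X → ℝ} (h : IsGamble f) (T : X → X) : IsGamble (f ∘ T) := by
  obtain ⟨C, hC⟩ := isGamble_bound h
  exact isGamble_of_bound (C := C) fun x => hC (T x)

def GambleSub (X : Type*) : Submodule ℝ (X → ℝ) where
  carrier := {f | IsGamble f}
  add_mem' := by
    intro f g hf hg
    obtain ⟨C, hC⟩ := isGamble_bound hf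
    obtain ⟨D, hD⟩ := isGamble_bound hg
    exact isGamble_of_bound (C := C + D) fun x => by
      simpa using (abs_add_le (f x) (g x)).trans (add_le_add (hC x) (hD x))
  zero_mem' := isGamble_of_bound (C := 0) fun x => by simp
  smul_mem' := by
    intro c f hf
    obtain ⟨C, hC⟩ := isGamble_bound hf
    exact isGamble_of_bound (C := |c| * C) fun x => by
      rw [Pi.smul_apply, smul_eq_mul, abs_mul]
      exact mul_le_mul_of_nonneg_left (hC x) (abs_nonneg c)

@[simp] lemma mem_GambleSub {f : X → ℝ} : f ∈ GambleSub X ↔ IsGamble f := Iff.rfl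

lemma isGamble_add {f g : X → ℝ} (hf : IsGamble f) (hg : IsGamble g) : IsGamble (f + g) :=
  (GambleSub X).add_mem hf hg

lemma isGamble_neg {f : X → ℝ} (hf : IsGamble f) : IsGamble (-f) :=
  (GambleSub X).neg_mem hf

lemma isGamble_sub {f g : X → ℝ} (hf : IsGamble f) (hg : IsGamble g) : IsGamble (f - g) :=
  (GambleSub X).sub_mem hf hg

lemma le_sInf_range [Nonempty X] {f : X → ℝ} {c : ℝ} (h : ∀ x, c ≤ f x) :
    c ≤ sInf (Set.range f) :=
  le_csInf (Set.range_nonempty f) (by rintro y ⟨x, rfl⟩; exact h x)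

end Aux
section Approx
variable {X : Type*}

lemma sum_indicator_count (n : ℕ) (s : ℝ) (h0 : 0 ≤ s) (h1 : s < n) :
    (∑ k ∈ Finset.Icc 1 n, (if (k : ℝ) ≤ s then (1:ℝ) else 0)) = (⌊s⌋₊ : ℝ) := by
  rw [Finset.sum_boole]
  congr 1
  have : (Finset.Icc 1 n).filter (fun k : ℕ => (k : ℝ) ≤ s) = Finset.Icc 1 ⌊s⌋₊ := by
    ext k
    simp only [Finset.mem_filter, Finset.mem_Icc]
    constructor
    · rintro ⟨⟨h1k, _⟩, hks⟩
      exact ⟨h1k, Nat.le_floor hks⟩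
    · rintro ⟨h1k, hkf⟩
      have hfn : ⌊s⌋₊ < n := (Nat.floor_lt h0).2 h1
      refine ⟨⟨h1k, le_trans hkf hfn.le⟩, ?_⟩
      calc (k : ℝ) ≤ (⌊s⌋₊ : ℝ) := Nat.cast_le.2 hkf
        _ ≤ s := Nat.floor_le h0
  rw [this, Nat.card_Icc]
  simp

end Approx
section Core
variable {X : Type*} [Nonempty X]

lemma phi_abs_bound (Φ : GambleSub X →ₗ[ℝ] ℝ)
    (hmono : ∀ g : GambleSub X, sInf (Set.range (g : X → ℝ)) ≤ Φ g)
    (u v : GambleSub X) (ε : ℝ)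
    (h : ∀ x, |(u : X → ℝ) x - (v : X → ℝ) x| ≤ ε) : |Φ u - Φ v| ≤ ε := by
  have h1 : -ε ≤ Φ (u - v) := by
    refine le_trans (le_sInf_range (f := ((u - v : GambleSub X) : X → ℝ)) fun x => ?_) (hmono _)
    have := (abs_le.1 (h x)).1
    simpa using this
  have h2 : -ε ≤ Φ (v - u) := by
    refine le_trans (le_sInf_range (f := ((v - u : GambleSub X) : X → ℝ)) fun x => ?_) (hmono _)
    have := (abs_le.1 (h x)).2
    simpa using by linarith
  rw [map_sub] at h1 h2
  exact abs_le.2 ⟨by linarith, by linarith⟩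

lemma comp_eq_aux (Φ : GambleSub X →ₗ[ℝ] ℝ)
    (hmono : ∀ g : GambleSub X, sInf (Set.range (g : X → ℝ)) ≤ Φ g)
    (T : X → X)
    (hind : ∀ A : Set X, Φ ⟨Set.indicator (T ⁻¹' A) (fun _ => (1:ℝ)), isGamble_indicator _⟩
        = Φ ⟨Set.indicator A (fun _ => (1:ℝ)), isGamble_indicator _⟩)
    (g : X → ℝ) (hg : IsGamble g) (hg0 : ∀ x, 0 ≤ g x) (hg1 : ∀ x, g x < 1) :
    Φ ⟨g ∘ T, isGamble_comp hg T⟩ = Φ ⟨g, hg⟩ := by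
  have key : ∀ ε > 0, |Φ ⟨g ∘ T, isGamble_comp hg T⟩ - Φ ⟨g, hg⟩| ≤ ε := by
    intro ε hε
    obtain ⟨n, hn⟩ := exists_nat_gt (2 / ε)
    have hn0 : (0:ℝ) < n := lt_trans (div_pos two_pos hε) hn
    have h2n : 2 / (n:ℝ) ≤ ε := by
      rw [div_le_iff₀ hn0]
      have := (div_lt_iff₀ hε).1 hn
      nlinarith
    set A : ℕ → Set X := fun k => {y | (k : ℝ) ≤ n * g y} with hA
    set S : GambleSub X := (n:ℝ)⁻¹ • ∑ k ∈ Finset.Icc 1 n,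
      (⟨Set.indicator (A k) (fun _ => (1:ℝ)), isGamble_indicator _⟩ : GambleSub X) with hS
    set S' : GambleSub X := (n:ℝ)⁻¹ • ∑ k ∈ Finset.Icc 1 n,
      (⟨Set.indicator (T ⁻¹' (A k)) (fun _ => (1:ℝ)), isGamble_indicator _⟩ : GambleSub X) with hS'
    -- pointwise floor description
    have hfloor : ∀ (u : X → ℝ), (∀ x, 0 ≤ u x) → (∀ x, u x < 1) → ∀ x,
        ((n:ℝ)⁻¹ * ∑ k ∈ Finset.Icc 1 n,
            Set.indicator {y | (k : ℝ) ≤ n * u y} (fun _ => (1:ℝ)) x)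
          = (n:ℝ)⁻¹ * (⌊(n:ℝ) * u x⌋₊ : ℝ) := by
      intro u hu0 hu1 x
      congr 1
      have hcount := sum_indicator_count n ((n:ℝ) * u x)
        (mul_nonneg hn0.le (hu0 x)) (by nlinarith [hu1 x])
      rw [← hcount]
      refine Finset.sum_congr rfl fun k _ => ?_
      simp [Set.indicator_apply, Set.mem_setOf_eq]
    have hdiff : ∀ (u : X → ℝ), (∀ x, 0 ≤ u x) → (∀ x, u x < 1) → ∀ x,
        |u x - (n:ℝ)⁻¹ * (⌊(n:ℝ) * u x⌋₊ : ℝ)| ≤ 1 / n := by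
      intro u hu0 hu1 x
      have h1 : (⌊(n:ℝ) * u x⌋₊ : ℝ) ≤ (n:ℝ) * u x := Nat.floor_le (mul_nonneg hn0.le (hu0 x))
      have h2 : (n:ℝ) * u x < (⌊(n:ℝ) * u x⌋₊ : ℝ) + 1 := Nat.lt_floor_add_one _
      have e1 : (n:ℝ)⁻¹ * ((n:ℝ) * u x) = u x := by field_simp
      have e2 := mul_lt_mul_of_pos_left h2 (inv_pos.2 hn0)
      have e3 := mul_le_mul_of_nonneg_left h1 (inv_pos.2 hn0).le
      rw [mul_add, e1, mul_one] at e2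
      rw [e1] at e3
      rw [abs_le, one_div]
      constructor <;> linarith
    -- coercion descriptions of S, S'
    have hScoe : ∀ x, (S : X → ℝ) x = (n:ℝ)⁻¹ * ∑ k ∈ Finset.Icc 1 n,
        Set.indicator {y | (k : ℝ) ≤ n * g y} (fun _ => (1:ℝ)) x := by
      intro x
      rw [hS]
      push_cast [Submodule.coe_smul, AddSubmonoidClass.coe_finset_sum]
      simp [hA]
    have hS'coe : ∀ x, (S' : X → ℝ) x = (n:ℝ)⁻¹ * ∑ k ∈ Finset.Icc 1 n,
        Set.indicator {y | (k : ℝ) ≤ n * (g ∘ T) y} (fun _ => (1:ℝ)) x := by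
      intro x
      rw [hS']
      push_cast [Submodule.coe_smul, AddSubmonoidClass.coe_finset_sum]
      simp [hA, Set.indicator_apply, Set.preimage_setOf_eq]
    have hΦSS : Φ S' = Φ S := by
      rw [hS, hS', map_smul, map_smul, map_sum, map_sum]
      congr 1
      exact Finset.sum_congr rfl fun k _ => hind (A k)
    have b1 : |Φ ⟨g ∘ T, isGamble_comp hg T⟩ - Φ S'| ≤ 1 / n := by
      refine phi_abs_bound Φ hmono _ _ _ fun x => ?_
      rw [hS'coe x, hfloor (g ∘ T) (fun x => hg0 (T x)) (fun x => hg1 (T x)) x]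
      exact hdiff (g ∘ T) (fun x => hg0 (T x)) (fun x => hg1 (T x)) x
    have b2 : |Φ S - Φ ⟨g, hg⟩| ≤ 1 / n := by
      refine phi_abs_bound Φ hmono _ _ _ fun x => ?_
      rw [abs_sub_comm, hScoe x, hfloor g hg0 hg1 x]
      exact hdiff g hg0 hg1 x
    have hsplit : Φ ⟨g ∘ T, isGamble_comp hg T⟩ - Φ ⟨g, hg⟩
        = (Φ ⟨g ∘ T, isGamble_comp hg T⟩ - Φ S') + (Φ S - Φ ⟨g, hg⟩) := by
      rw [hΦSS]; ring
    have habs := (hsplit ▸ abs_add_le _ _).trans (add_le_add b1 b2)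
    have : 1 / (n:ℝ) + 1 / n = 2 / n := by ring
    linarith
  have h0 : |Φ ⟨g ∘ T, isGamble_comp hg T⟩ - Φ ⟨g, hg⟩| ≤ 0 :=
    le_of_forall_pos_le_add fun ε hε => by simpa using key ε hε
  have := abs_nonpos_iff.1 h0
  linarith [abs_nonneg (Φ ⟨g ∘ T, isGamble_comp hg T⟩ - Φ ⟨g, hg⟩), sub_eq_zero.1 this]

end Core
section Ext
variable {X : Type*} [Nonempty X]

lemma comp_eq (Φ : GambleSub X →ₗ[ℝ] ℝ)
    (hmono : ∀ g : GambleSub X, sInf (Set.range (g : X → ℝ)) ≤ Φ g)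
    (T : X → X)
    (hind : ∀ A : Set X, Φ ⟨Set.indicator (T ⁻¹' A) (fun _ => (1:ℝ)), isGamble_indicator _⟩
        = Φ ⟨Set.indicator A (fun _ => (1:ℝ)), isGamble_indicator _⟩)
    (f : X → ℝ) (hf : IsGamble f) :
    Φ ⟨f ∘ T, isGamble_comp hf T⟩ = Φ ⟨f, hf⟩ := by
  obtain ⟨C, hC⟩ := isGamble_bound hf
  have hC0 : 0 ≤ C := le_trans (abs_nonneg _) (hC (Classical.arbitrary X))
  set D : ℝ := 2 * C + 1 with hD
  have hDpos : 0 < D := by simp only [hD]; linarith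
  set g : X → ℝ := fun x => (f x + C + 1/2) / D with hgdef
  have hg0 : ∀ x, 0 ≤ g x := fun x =>
    div_nonneg (by have := (abs_le.1 (hC x)).1; linarith) hDpos.le
  have hg1 : ∀ x, g x < 1 := fun x =>
    (div_lt_one hDpos).2 (by have := (abs_le.1 (hC x)).2; simp only [hD]; linarith)
  have hg : IsGamble g := isGamble_of_bound (C := 1) fun x =>
    abs_le.2 ⟨by linarith [hg0 x], (hg1 x).le⟩
  have hmain := comp_eq_aux Φ hmono T hind g hg hg0 hg1
  have hDne : D ≠ 0 := hDpos.ne'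
  have hsplit : (⟨f, hf⟩ : GambleSub X)
      = D • (⟨g, hg⟩ : GambleSub X) - ⟨fun _ => C + 1/2, isGamble_const _⟩ := by
    apply Subtype.ext
    funext x
    show f x = D * g x - (C + 1/2)
    rw [hgdef]
    field_simp
    ring
  have hsplitT : (⟨f ∘ T, isGamble_comp hf T⟩ : GambleSub X)
      = D • (⟨g ∘ T, isGamble_comp hg T⟩ : GambleSub X)
        - ⟨fun _ => C + 1/2, isGamble_const _⟩ := by
    apply Subtype.ext
    funext x
    show f (T x) = D * g (T x) - (C + 1/2)
    rw [hgdef]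
    field_simp
    ring
  rw [hsplit, hsplitT, map_sub, map_sub, map_smul, map_smul, hmain]

omit [Nonempty X] in
lemma L_zero {L : (X → ℝ) → ℝ} (hL : IsCoherentLowerPrevision L) : L 0 = 0 := by
  have := hL.2.2 0 ((GambleSub X).zero_mem) 0 le_rfl
  simpa using this

omit [Nonempty X] in
lemma L_le_neg {L : (X → ℝ) → ℝ} (hL : IsCoherentLowerPrevision L)
    {u : X → ℝ} (hu : IsGamble u) : L u ≤ -L (-u) := by
  have h := hL.2.1 u (-u) hu ((GambleSub X).neg_mem hu)
  rw [add_neg_cancel, L_zero hL] at h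
  linarith

omit [Nonempty X] in
lemma exists_linear_ext (L : (X → ℝ) → ℝ) (hL : IsCoherentLowerPrevision L)
    (g₀ : X → ℝ) (hg₀ : IsGamble g₀) (hne : g₀ ≠ 0) :
    ∃ Φ : GambleSub X →ₗ[ℝ] ℝ, Φ ⟨g₀, hg₀⟩ = L g₀ ∧ ∀ u : GambleSub X, L u ≤ Φ u := by
  set N : GambleSub X → ℝ := fun u => -L (-(u : X → ℝ)) with hN
  have hLN : ∀ u : GambleSub X, L u ≤ N u := fun u => L_le_neg hL u.2
  have N_hom : ∀ c : ℝ, 0 < c → ∀ x : GambleSub X, N (c • x) = c * N x := by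
    intro c hc x
    show -L (-(((c • x : GambleSub X)) : X → ℝ)) = c * (-L (-(x : X → ℝ)))
    have hco : (-(((c • x : GambleSub X)) : X → ℝ)) = c • (-(x : X → ℝ)) := by
      rw [show (((c • x : GambleSub X)) : X → ℝ) = c • (x : X → ℝ) from rfl, ← smul_neg]
    rw [hco, hL.2.2 (-(x : X → ℝ)) ((GambleSub X).neg_mem x.2) c hc.le]
    ring
  have N_add : ∀ x y : GambleSub X, N (x + y) ≤ N x + N y := by
    intro x y
    show -L (-(((x + y : GambleSub X)) : X → ℝ)) ≤ -L (-(x : X → ℝ)) + -L (-(y : X → ℝ))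
    have h := hL.2.1 (-(x : X → ℝ)) (-(y : X → ℝ))
      ((GambleSub X).neg_mem x.2) ((GambleSub X).neg_mem y.2)
    have hco : (-(((x + y : GambleSub X)) : X → ℝ)) = -(x : X → ℝ) + -(y : X → ℝ) := by
      rw [show (((x + y : GambleSub X)) : X → ℝ) = (x : X → ℝ) + (y : X → ℝ) from rfl]
      abel
    rw [hco]
    linarith
  set g₀' : GambleSub X := ⟨g₀, hg₀⟩ with hg₀'
  have hne' : g₀' ≠ 0 := fun h => hne (by have := congrArg Subtype.val h; exact this)
  set pm : GambleSub X →ₗ.[ℝ] ℝ := LinearPMap.mkSpanSingleton g₀' (L g₀) hne' with hpm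
  have hdom : ∀ x : pm.domain, pm x ≤ N x := by
    rintro ⟨x, hx⟩
    obtain ⟨c, rfl⟩ := Submodule.mem_span_singleton.1 hx
    have happ : pm ⟨c • g₀', hx⟩ = c • (L g₀) := LinearPMap.mkSpanSingleton'_apply _ _ _ c _
    rw [happ]
    rcases lt_trichotomy c 0 with hc | hc | hc
    · -- c < 0
      have hNval : N (c • g₀') = -((-c) * L g₀) := by
        show -L (-(((c • g₀' : GambleSub X)) : X → ℝ)) = _
        have hco : (-(((c • g₀' : GambleSub X)) : X → ℝ)) = (-c) • g₀ := by
          rw [show (((c • g₀' : GambleSub X)) : X → ℝ) = c • g₀ from rfl, ← neg_smul]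
        rw [hco, hL.2.2 g₀ hg₀ (-c) (by linarith)]
      rw [hNval]
      simp only [smul_eq_mul, neg_mul, neg_neg]
      exact le_rfl
    · -- c = 0
      subst hc
      have hNval : N ((0:ℝ) • g₀') = 0 := by
        rw [zero_smul]
        show -L (-(((0 : GambleSub X)) : X → ℝ)) = 0
        rw [show (((0 : GambleSub X)) : X → ℝ) = 0 from rfl, neg_zero, L_zero hL, neg_zero]
      rw [hNval]
      simp
    · -- c > 0
      rw [N_hom c hc]
      have hgN : L g₀ ≤ N g₀' := hLN g₀'
      simp only [smul_eq_mul]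
      exact mul_le_mul_of_nonneg_left hgN hc.le
  obtain ⟨Φ, hΦeq, hΦle⟩ := exists_extension_of_le_sublinear pm N N_hom N_add hdom
  refine ⟨Φ, ?_, ?_⟩
  · have h1 := hΦeq ⟨g₀', Submodule.mem_span_singleton_self g₀'⟩
    have h2 : pm ⟨g₀', Submodule.mem_span_singleton_self g₀'⟩ = L g₀ :=
      LinearPMap.mkSpanSingleton_apply ℝ ℝ hne' (L g₀)
    rw [h2] at h1
    exact h1
  · intro u
    have h3 := hΦle (-u)
    have h4 : N (-u) = -L (u : X → ℝ) := by
      show -L (-(((-u : GambleSub X)) : X → ℝ)) = _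
      congr 2
      simp
    rw [map_neg, h4] at h3
    linarith

end Ext
theorem stmt13 (X : Type*) [Nonempty X] (𝒯 : Set (X → X))
    (h𝒯 : IsTransformationMonoid 𝒯)
    (L : (X → ℝ) → ℝ) (hL : IsCoherentLowerPrevision L) :
    (∀ f : X → ℝ, IsGamble f → ∀ T ∈ 𝒯,
        0 ≤ L (f - f ∘ T) ∧ 0 ≤ L (f ∘ T - f)) ↔
    (∀ P ∈ Dominating L, ∀ A : Set X, ∀ T ∈ 𝒯,
        P (Set.indicator (T ⁻¹' A) (fun _ => (1 : ℝ))) =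
          P (Set.indicator A (fun _ => (1 : ℝ)))) := by
  classical
  constructor
  · intro hinv P hP A T hT
    have hu : IsGamble (Set.indicator A (fun _ => (1:ℝ))) := isGamble_indicator A
    set u := Set.indicator A (fun _ => (1:ℝ)) with hudef
    have hcomp : u ∘ T = Set.indicator (T ⁻¹' A) (fun _ => (1:ℝ)) := by
      funext x
      by_cases hx : T x ∈ A <;>
        simp [hudef, Set.indicator_apply, hx, Set.mem_preimage, Function.comp]
    obtain ⟨h1, h2⟩ := hinv u hu T hT
    have huT : IsGamble (u ∘ T) := isGamble_comp hu T
    have hadd := hP.1.1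
    have e1 : P ((u - u ∘ T) + u ∘ T) = P (u - u ∘ T) + P (u ∘ T) :=
      hadd _ _ (isGamble_sub hu huT) huT
    rw [sub_add_cancel] at e1
    have e2 : P ((u ∘ T - u) + u) = P (u ∘ T - u) + P u :=
      hadd _ _ (isGamble_sub huT hu) hu
    rw [sub_add_cancel] at e2
    have d1 : 0 ≤ P (u - u ∘ T) := le_trans h1 (hP.2 _ (isGamble_sub hu huT))
    have d2 : 0 ≤ P (u ∘ T - u) := le_trans h2 (hP.2 _ (isGamble_sub huT hu))
    rw [← hcomp]
    linarith
  · intro hP f hf T hT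
    have huT : IsGamble (f ∘ T) := isGamble_comp hf T
    have main : ∀ g₀ : X → ℝ, ∀ hg₀ : IsGamble g₀,
        ((⟨g₀, hg₀⟩ : GambleSub X) = ⟨f, hf⟩ - ⟨f ∘ T, huT⟩ ∨
         (⟨g₀, hg₀⟩ : GambleSub X) = ⟨f ∘ T, huT⟩ - ⟨f, hf⟩) → 0 ≤ L g₀ := by
      intro g₀ hg₀ hcase
      by_contra hneg
      push_neg at hneg
      have hne : g₀ ≠ 0 := by
        intro h0
        rw [h0, L_zero hL] at hneg
        exact lt_irrefl 0 hneg
      obtain ⟨Φ, hΦ₀, hΦle⟩ := exists_linear_ext L hL g₀ hg₀ hne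
      have hmono : ∀ g : GambleSub X, sInf (Set.range (g : X → ℝ)) ≤ Φ g :=
        fun g => le_trans (hL.1 g g.2) (hΦle g)
      set P : (X → ℝ) → ℝ := fun v => if hv : IsGamble v then Φ ⟨v, hv⟩ else 0 with hPdef
      have hPval : ∀ v (hv : IsGamble v), P v = Φ ⟨v, hv⟩ := fun v hv => dif_pos hv
      have hPdom : P ∈ Dominating L := by
        refine ⟨⟨?_, ?_⟩, ?_⟩
        · intro a b ha hb
          rw [hPval a ha, hPval b hb, hPval _ (isGamble_add ha hb),
            show (⟨a + b, isGamble_add ha hb⟩ : GambleSub X) = ⟨a, ha⟩ + ⟨b, hb⟩ from rfl,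
            map_add]
        · intro a ha
          rw [hPval a ha]
          exact hmono ⟨a, ha⟩
        · intro a ha
          rw [hPval a ha]
          exact hΦle ⟨a, ha⟩
      have hindΦ : ∀ A : Set X,
          Φ ⟨Set.indicator (T ⁻¹' A) (fun _ => (1:ℝ)), isGamble_indicator _⟩
            = Φ ⟨Set.indicator A (fun _ => (1:ℝ)), isGamble_indicator _⟩ := by
        intro A
        have := hP P hPdom A T hT
        rwa [hPval _ (isGamble_indicator _), hPval _ (isGamble_indicator _)] at this
      have hkey : Φ ⟨f ∘ T, huT⟩ = Φ ⟨f, hf⟩ := comp_eq Φ hmono T hindΦ f hf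
      have hzero : Φ ⟨g₀, hg₀⟩ = 0 := by
        rcases hcase with h | h <;> rw [h, map_sub, hkey, sub_self]
      rw [hΦ₀] at hzero
      linarith
    exact ⟨main (f - f ∘ T) (isGamble_sub hf huT) (Or.inl rfl),
      main (f ∘ T - f) (isGamble_sub huT hf) (Or.inr rfl)⟩
end

section
/- Let 𝒯 be a monoid of transformations of a nonempty set X, and let L be a lower prevision on a 𝒯-invariant set 𝒦 of gambles on X that contains the indicator gamble of every subset of X and contains f − f∘T and f∘T − f for all f ∈ 𝒦, T ∈ 𝒯. Assume L avoids sure loss and is strongly 𝒯-invariant on 𝒦, i.e. L(f − f∘T) ≥ 0 and L(f∘T − f) ≥ 0 for all f ∈ 𝒦, T ∈ 𝒯. Then the natural extension E_L of L to all gambles is strongly 𝒯-invariant: E_L(f − f∘T) ≥ 0 and E_L(f∘T − f) ≥ 0 for every gamble f on X and every T ∈ 𝒯. -/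
def AvoidsSureLoss {X : Type*} (𝒦 : Set (X → ℝ)) (L : (X → ℝ) → ℝ) : Prop :=
  ∀ (n : ℕ) (lam : Fin n → ℝ) (fs : Fin n → X → ℝ),
    (∀ k, 0 ≤ lam k) → (∀ k, fs k ∈ 𝒦) →
    0 ≤ ⨆ x : X, ∑ k, lam k * (fs k x - L (fs k))

noncomputable def NatExt {X : Type*} (𝒦 : Set (X → ℝ)) (L : (X → ℝ) → ℝ)
    (g : X → ℝ) : ℝ :=
  sSup {α : ℝ | ∃ (n : ℕ) (lam : Fin n → ℝ) (fs : Fin n → X → ℝ),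
    (∀ k, 0 ≤ lam k) ∧ (∀ k, fs k ∈ 𝒦) ∧
    α = ⨅ x : X, (g x - ∑ k, lam k * (fs k x - L (fs k)))}

open Finset


lemma layer {X : Type*} (f : X → ℝ) (hf : IsGamble f) (ε : ℝ) (hε : 0 < ε) :
    ∃ (n : ℕ) (A : Fin n → Set X) (c : ℝ), ∀ x : X,
      c ≤ f x - ε * ∑ i, (A i).indicator (fun _ => (1:ℝ)) x ∧
      f x - ε * ∑ i, (A i).indicator (fun _ => (1:ℝ)) x ≤ c + ε := by
  obtain ⟨M, hM⟩ := hf.1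
  obtain ⟨m, hm⟩ := hf.2
  have hMf : ∀ x, f x ≤ M := fun x => hM ⟨x, rfl⟩
  have hmf : ∀ x, m ≤ f x := fun x => hm ⟨x, rfl⟩
  set n := ⌈(M - m)/ε⌉₊ with hn
  set A : Fin n → Set X := fun i => {x | m + ((i:ℕ)+1)*ε ≤ f x} with hA
  refine ⟨n, A, m, fun x => ?_⟩
  set t := (f x - m)/ε with ht
  have hft : f x = m + ε * t := by rw [ht]; field_simp <;> ring
  have ht0 : 0 ≤ t := div_nonneg (by linarith [hmf x]) hε.le
  have htn : t ≤ n := by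
    have h1 : (M-m)/ε ≤ n := Nat.le_ceil _
    have h2 : t ≤ (M-m)/ε := (div_le_div_iff_of_pos_right hε).2 (by linarith [hMf x])
    linarith
  have hfl0 : 0 ≤ ⌊t⌋ := Int.floor_nonneg.2 ht0
  set K := ⌊t⌋.toNat with hK
  have hcast : ((K:ℕ):ℝ) = ((⌊t⌋:ℤ):ℝ) := by
    rw [hK]; exact_mod_cast congrArg (Int.cast : ℤ → ℝ) (Int.toNat_of_nonneg hfl0)
  have hKt : (K:ℝ) ≤ t := by rw [hcast]; exact Int.floor_le t
  have htK : t < K + 1 := by rw [hcast]; exact Int.lt_floor_add_one t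
  have hKn : K ≤ n := by exact_mod_cast hKt.trans htn
  have hsum : ∑ i : Fin n, (A i).indicator (fun _ => (1:ℝ)) x = K := by
    have step : ∀ i : Fin n, (A i).indicator (fun _ => (1:ℝ)) x
        = if (i:ℕ) < K then 1 else 0 := by
      intro i
      have hiff : x ∈ A i ↔ (i:ℕ) < K := by
        rw [hA]
        simp only [Set.mem_setOf_eq]
        constructor
        · intro h
          have h2 : ((i:ℕ):ℝ) + 1 ≤ t := by rw [hft] at h; nlinarith
          have h3 : ((i:ℕ):ℤ) + 1 ≤ ⌊t⌋ := by rw [Int.le_floor]; push_cast; linarith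
          omega
        · intro h
          have h2 : ((i:ℕ):ℝ) + 1 ≤ K := by exact_mod_cast h
          have h3 : ((i:ℕ):ℝ) + 1 ≤ t := le_trans h2 hKt
          rw [hft]; nlinarith
      simp only [Set.indicator_apply]
      exact if_congr hiff rfl rfl
    calc ∑ i : Fin n, (A i).indicator (fun _ => (1:ℝ)) x
        = ∑ i : Fin n, (if (i:ℕ) < K then (1:ℝ) else 0) :=
          Finset.sum_congr rfl (fun i _ => step i)
      _ = ∑ i ∈ Finset.range n, (if i < K then (1:ℝ) else 0) :=
          by exact Fin.sum_univ_eq_sum_range (fun i => if i < K then (1:ℝ) else 0) n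
      _ = ∑ i ∈ (Finset.range n).filter (· < K), (1:ℝ) := (Finset.sum_filter _ _).symm
      _ = ∑ i ∈ Finset.range K, (1:ℝ) := by
          congr 1
          ext j
          simp only [Finset.mem_filter, Finset.mem_range]
          omega
      _ = K := by simp
  rw [hsum]
  have h1 : ε * K ≤ ε * t := mul_le_mul_of_nonneg_left hKt hε.le
  have h2 : ε * t ≤ ε * K + ε := by nlinarith
  constructor <;> linarith

lemma key {X : Type*} [Nonempty X] (𝒦 : Set (X → ℝ)) (L : (X → ℝ) → ℝ) (g : X → ℝ)
    (H : ∀ ε : ℝ, 0 < ε → ∃ (n : ℕ) (lam : Fin n → ℝ) (fs : Fin n → X → ℝ),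
      (∀ k, 0 ≤ lam k) ∧ (∀ k, fs k ∈ 𝒦) ∧
      ∀ x, -ε ≤ g x - ∑ k, lam k * (fs k x - L (fs k))) :
    0 ≤ NatExt 𝒦 L g := by
  unfold NatExt
  set S := {α : ℝ | ∃ (n : ℕ) (lam : Fin n → ℝ) (fs : Fin n → X → ℝ),
    (∀ k, 0 ≤ lam k) ∧ (∀ k, fs k ∈ 𝒦) ∧
    α = ⨅ x : X, (g x - ∑ k, lam k * (fs k x - L (fs k)))} with hS
  by_cases hb : BddAbove S
  · by_contra h0
    push_neg at h0
    obtain ⟨n, lam, fs, h1, h2, h3⟩ := H (-(sSup S)/2) (by linarith)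
    have hmem : (⨅ x : X, (g x - ∑ k, lam k * (fs k x - L (fs k)))) ∈ S :=
      ⟨n, lam, fs, h1, h2, rfl⟩
    have h5 : -(-(sSup S)/2) ≤ ⨅ x : X, (g x - ∑ k, lam k * (fs k x - L (fs k))) :=
      le_ciInf (fun x => h3 x)
    have h6 := le_csSup hb hmem
    linarith
  · rw [Real.sSup_of_not_bddAbove hb]

theorem stmt14 (X : Type*) [Nonempty X] (𝒯 : Set (X → X))
    (h𝒯 : IsTransformationMonoid 𝒯)
    (𝒦 : Set (X → ℝ)) (h𝒦g : ∀ f ∈ 𝒦, IsGamble f)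
    (h𝒦T : ∀ f ∈ 𝒦, ∀ T ∈ 𝒯, f ∘ T ∈ 𝒦)
    (hind : ∀ A : Set X, Set.indicator A (fun _ => (1 : ℝ)) ∈ 𝒦)
    (hdiff : ∀ f ∈ 𝒦, ∀ T ∈ 𝒯, (f - f ∘ T) ∈ 𝒦 ∧ (f ∘ T - f) ∈ 𝒦)
    (L : (X → ℝ) → ℝ) (hasl : AvoidsSureLoss 𝒦 L)
    (hstrong : ∀ f ∈ 𝒦, ∀ T ∈ 𝒯, 0 ≤ L (f - f ∘ T) ∧ 0 ≤ L (f ∘ T - f)) :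
    ∀ f : X → ℝ, IsGamble f → ∀ T ∈ 𝒯,
      0 ≤ NatExt 𝒦 L (f - f ∘ T) ∧ 0 ≤ NatExt 𝒦 L (f ∘ T - f) := by
  intro f hf T hT
  constructor
  · apply key
    intro ε hε
    obtain ⟨n, A, c, hAc⟩ := layer f hf ε hε
    set I : Fin n → X → ℝ := fun k => Set.indicator (A k) (fun _ => (1:ℝ)) with hI
    refine ⟨n, fun _ => ε, fun k => I k - (I k) ∘ T, fun k => hε.le,
      fun k => (hdiff _ (hind (A k)) T hT).1, fun x => ?_⟩
    have hL : ∀ k, 0 ≤ L (I k - (I k) ∘ T) := fun k => (hstrong _ (hind (A k)) T hT).1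
    have hsle : ∑ k : Fin n, ε * ((I k - (I k) ∘ T) x - L (I k - (I k) ∘ T))
        ≤ ∑ k : Fin n, ε * (I k - (I k) ∘ T) x :=
      Finset.sum_le_sum (fun k _ => by nlinarith [hL k])
    have hval : ∑ k : Fin n, ε * (I k - (I k) ∘ T) x
        = ε * ∑ k : Fin n, I k x - ε * ∑ k : Fin n, I k (T x) := by
      simp only [Pi.sub_apply, Function.comp_apply, mul_sub]
      rw [Finset.sum_sub_distrib, Finset.mul_sum, Finset.mul_sum]
    have h1 := (hAc x).1
    have h2 := (hAc x).2
    have h3 := (hAc (T x)).1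
    have h4 := (hAc (T x)).2
    simp only [hI, Pi.sub_apply, Function.comp_apply] at hsle hval ⊢
    linarith
  · apply key
    intro ε hε
    obtain ⟨n, A, c, hAc⟩ := layer f hf ε hε
    set I : Fin n → X → ℝ := fun k => Set.indicator (A k) (fun _ => (1:ℝ)) with hI
    refine ⟨n, fun _ => ε, fun k => (I k) ∘ T - I k, fun k => hε.le,
      fun k => (hdiff _ (hind (A k)) T hT).2, fun x => ?_⟩
    have hL : ∀ k, 0 ≤ L ((I k) ∘ T - I k) := fun k => (hstrong _ (hind (A k)) T hT).2
    have hsle : ∑ k : Fin n, ε * (((I k) ∘ T - I k) x - L ((I k) ∘ T - I k))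
        ≤ ∑ k : Fin n, ε * ((I k) ∘ T - I k) x :=
      Finset.sum_le_sum (fun k _ => by nlinarith [hL k])
    have hval : ∑ k : Fin n, ε * ((I k) ∘ T - I k) x
        = ε * ∑ k : Fin n, I k (T x) - ε * ∑ k : Fin n, I k x := by
      simp only [Pi.sub_apply, Function.comp_apply, mul_sub]
      rw [Finset.sum_sub_distrib, Finset.mul_sum, Finset.mul_sum]
    have h1 := (hAc x).1
    have h2 := (hAc x).2
    have h3 := (hAc (T x)).1
    have h4 := (hAc (T x)).2
    simp only [hI, Pi.sub_apply, Function.comp_apply] at hsle hval ⊢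
    linarith
end

section
/- Let f : ℕ → ℝ be a bounded sequence. Then the following chain of inequalities holds: liminf_{n→∞} f(n) ≤ sup_{n≥1} inf_{k≥0} (1/n) Σ_{ℓ=k}^{k+n−1} f(ℓ) ≤ liminf_{n→∞} (1/n) Σ_{ℓ=0}^{n−1} f(ℓ) ≤ limsup_{n→∞} (1/n) Σ_{ℓ=0}^{n−1} f(ℓ) ≤ inf_{n≥1} sup_{k≥0} (1/n) Σ_{ℓ=k}^{k+n−1} f(ℓ) ≤ limsup_{n→∞} f(n). Moreover: (a) if lim_{n→∞} f(n) exists, then all six quantities are equal to this limit; (b) if f is periodic with period m ≥ 1 (f(n+m) = f(n) for all n), then the four middle quantities are all equal to (1/m) Σ_{r=0}^{m−1} f(r); (c) if f(n) = 0 for all but finitely many n, then the four middle quantities are all equal to 0. -/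
noncomputable def lowWin (f : ℕ → ℝ) : ℝ :=
  ⨆ n : ℕ, ⨅ k : ℕ, (∑ ℓ ∈ Finset.range (n+1), f (k + ℓ)) / ((n : ℝ) + 1)

noncomputable def upWin (f : ℕ → ℝ) : ℝ :=
  ⨅ n : ℕ, ⨆ k : ℕ, (∑ ℓ ∈ Finset.range (n+1), f (k + ℓ)) / ((n : ℝ) + 1)

noncomputable def cesaro (f : ℕ → ℝ) (n : ℕ) : ℝ :=
  (∑ ℓ ∈ Finset.range n, f ℓ) / (n : ℝ)

open Filter Finset

/-- window average -/
noncomputable def winAvg (f : ℕ → ℝ) (n k : ℕ) : ℝ :=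
  (∑ ℓ ∈ Finset.range (n+1), f (k + ℓ)) / ((n : ℝ) + 1)

lemma lowWin_eq (f : ℕ → ℝ) : lowWin f = ⨆ n : ℕ, ⨅ k : ℕ, winAvg f n k := rfl

lemma upWin_eq (f : ℕ → ℝ) : upWin f = ⨅ n : ℕ, ⨆ k : ℕ, winAvg f n k := rfl

lemma my_le_of_eps {a b : ℝ} (h : ∀ ε : ℝ, 0 < ε → a ≤ b + ε) : a ≤ b := by
  by_contra hc; push_neg at hc; linarith [h ((a-b)/2) (by linarith)]

lemma winAvg_abs_le (f : ℕ → ℝ) {B : ℝ} (hB : ∀ n, |f n| ≤ B) (n k : ℕ) :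
    |winAvg f n k| ≤ B := by
  have hpos : (0:ℝ) < (n:ℝ) + 1 := by positivity
  rw [winAvg, abs_div, abs_of_pos hpos, div_le_iff₀ hpos]
  calc |∑ ℓ ∈ Finset.range (n+1), f (k + ℓ)|
      ≤ ∑ ℓ ∈ Finset.range (n+1), |f (k + ℓ)| := Finset.abs_sum_le_sum_abs _ _
    _ ≤ ∑ _ℓ ∈ Finset.range (n+1), B := Finset.sum_le_sum fun ℓ _ => hB _
    _ = B * ((n:ℝ) + 1) := by
        rw [Finset.sum_const, Finset.card_range, nsmul_eq_mul]; push_cast; ring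

lemma infWin_bddBelow (f : ℕ → ℝ) {B : ℝ} (hB : ∀ n, |f n| ≤ B) (n : ℕ) :
    BddBelow (Set.range fun k => winAvg f n k) :=
  ⟨-B, by rintro x ⟨k, rfl⟩; exact (abs_le.1 (winAvg_abs_le f hB n k)).1⟩

lemma supWin_bddAbove (f : ℕ → ℝ) {B : ℝ} (hB : ∀ n, |f n| ≤ B) (n : ℕ) :
    BddAbove (Set.range fun k => winAvg f n k) :=
  ⟨B, by rintro x ⟨k, rfl⟩; exact (abs_le.1 (winAvg_abs_le f hB n k)).2⟩

lemma infWin_bddAbove (f : ℕ → ℝ) {B : ℝ} (hB : ∀ n, |f n| ≤ B) :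
    BddAbove (Set.range fun n => ⨅ k, winAvg f n k) := by
  refine ⟨B, ?_⟩
  rintro x ⟨n, rfl⟩
  exact le_trans (ciInf_le (infWin_bddBelow f hB n) 0) (abs_le.1 (winAvg_abs_le f hB n 0)).2

lemma supWin_bddBelow (f : ℕ → ℝ) {B : ℝ} (hB : ∀ n, |f n| ≤ B) :
    BddBelow (Set.range fun n => ⨆ k, winAvg f n k) := by
  refine ⟨-B, ?_⟩
  rintro x ⟨n, rfl⟩
  exact le_trans (abs_le.1 (winAvg_abs_le f hB n 0)).1 (le_ciSup (supWin_bddAbove f hB n) 0)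

lemma cesaro_abs_le (f : ℕ → ℝ) {B : ℝ} (hB0 : 0 ≤ B) (hB : ∀ n, |f n| ≤ B) (m : ℕ) :
    |cesaro f m| ≤ B := by
  rcases Nat.eq_zero_or_pos m with hm | hm
  · simp [cesaro, hm, hB0]
  · have hpos : (0:ℝ) < (m:ℝ) := by exact_mod_cast hm
    rw [cesaro, abs_div, abs_of_pos hpos, div_le_iff₀ hpos]
    calc |∑ ℓ ∈ Finset.range m, f ℓ| ≤ ∑ ℓ ∈ Finset.range m, |f ℓ| :=
          Finset.abs_sum_le_sum_abs _ _
      _ ≤ ∑ _ℓ ∈ Finset.range m, B := Finset.sum_le_sum fun ℓ _ => hB _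
      _ = B * (m:ℝ) := by rw [Finset.sum_const, Finset.card_range, nsmul_eq_mul]; ring

/-- L1 : liminf f ≤ lowWin f -/
lemma liminf_le_lowWin (f : ℕ → ℝ) {B : ℝ} (hB : ∀ n, |f n| ≤ B) :
    Filter.liminf f Filter.atTop ≤ lowWin f := by
  have hB0 : 0 ≤ B := le_trans (abs_nonneg _) (hB 0)
  rw [Filter.liminf_eq, lowWin_eq]
  apply csSup_le
  · exact ⟨-B, Filter.Eventually.of_forall fun n => (abs_le.1 (hB n)).1⟩
  · intro c hc
    obtain ⟨N, hN⟩ := Filter.eventually_atTop.1 hc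
    apply my_le_of_eps
    intro ε hε
    set n : ℕ := ⌈(N:ℝ) * (|c| + B) / ε⌉₊ with hn
    have hkey : c - ε ≤ ⨅ k, winAvg f n k := by
      apply le_ciInf
      intro k
      have hpos : (0:ℝ) < (n:ℝ) + 1 := by positivity
      rw [winAvg, le_div_iff₀ hpos]
      -- pointwise bound
      have hpt : ∀ ℓ ∈ Finset.range (n+1),
          c - (|c| + B) * (if k + ℓ < N then 1 else 0) ≤ f (k + ℓ) := by
        intro ℓ _
        by_cases h : k + ℓ < N
        · simp only [h, if_true, mul_one]
          have h1 := (abs_le.1 (hB (k + ℓ))).1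
          have h2 := le_abs_self c
          linarith
        · simp only [h, if_false, mul_zero, sub_zero]
          exact hN _ (le_of_not_gt h)
      have hsum : ∑ ℓ ∈ Finset.range (n+1),
          (c - (|c| + B) * (if k + ℓ < N then 1 else 0)) ≤
          ∑ ℓ ∈ Finset.range (n+1), f (k + ℓ) := Finset.sum_le_sum hpt
      have hcard : ((Finset.range (n+1)).filter (fun ℓ => k + ℓ < N)).card ≤ N := by
        have hsub : (Finset.range (n+1)).filter (fun ℓ => k + ℓ < N) ⊆ Finset.range N := by
          intro ℓ hℓ
          rw [Finset.mem_filter] at hℓ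
          rw [Finset.mem_range]
          omega
        simpa using Finset.card_le_card hsub
      have heval : ∑ ℓ ∈ Finset.range (n+1),
          (c - (|c| + B) * (if k + ℓ < N then 1 else 0)) =
          ((n:ℝ)+1) * c - (|c| + B) *
            (((Finset.range (n+1)).filter (fun ℓ => k + ℓ < N)).card : ℝ) := by
        rw [Finset.sum_sub_distrib, Finset.sum_const, Finset.card_range, ← Finset.mul_sum,
          Finset.sum_boole, nsmul_eq_mul]
        push_cast; ring
      have hcB : (0:ℝ) ≤ |c| + B := by positivity
      have hcardR : (|c| + B) *
          (((Finset.range (n+1)).filter (fun ℓ => k + ℓ < N)).card : ℝ) ≤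
          (|c| + B) * N := by
        apply mul_le_mul_of_nonneg_left _ hcB
        exact_mod_cast hcard
      have hceil : (N:ℝ) * (|c| + B) ≤ ε * ((n:ℝ) + 1) := by
        have h1 : (N:ℝ) * (|c| + B) / ε ≤ (n:ℝ) := Nat.le_ceil _
        rw [div_le_iff₀ hε] at h1
        nlinarith
      nlinarith [hsum, heval, hcardR]
    calc c = (c - ε) + ε := by ring
      _ ≤ (⨅ k, winAvg f n k) + ε := by linarith
      _ ≤ (⨆ n, ⨅ k, winAvg f n k) + ε := by
          gcongr
          exact le_ciSup (infWin_bddAbove f hB) n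

/-- L2 : lowWin f ≤ liminf cesaro -/
lemma lowWin_le_liminf_cesaro (f : ℕ → ℝ) {B : ℝ} (hB : ∀ n, |f n| ≤ B) :
    lowWin f ≤ Filter.liminf (cesaro f) Filter.atTop := by
  have hB0 : 0 ≤ B := le_trans (abs_nonneg _) (hB 0)
  have hcob : Filter.IsCoboundedUnder (· ≥ ·) Filter.atTop (cesaro f) :=
    Filter.IsBoundedUnder.isCoboundedUnder_ge
      (Filter.isBoundedUnder_of ⟨B, fun (m : ℕ) => (abs_le.1 (cesaro_abs_le f hB0 hB m)).2⟩)
  rw [lowWin_eq]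
  apply ciSup_le
  intro n
  set I : ℝ := ⨅ k, winAvg f n k with hIdef
  apply my_le_of_eps
  intro ε hε
  have hnpos : (0:ℝ) < (n:ℝ) + 1 := by positivity
  have hblk : ∀ k, ((n:ℝ) + 1) * I ≤ ∑ ℓ ∈ Finset.range (n+1), f (k + ℓ) := by
    intro k
    have h := ciInf_le (infWin_bddBelow f hB n) k
    rw [winAvg, le_div_iff₀ hnpos] at h
    linarith [h]
  have hmul : ∀ q : ℕ, (q : ℝ) * (((n:ℝ) + 1) * I) ≤ ∑ ℓ ∈ Finset.range ((n+1) * q), f ℓ := by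
    intro q
    induction q with
    | zero => simp
    | succ q ih =>
      have : (n+1) * (q+1) = (n+1) * q + (n+1) := by ring
      rw [this, Finset.sum_range_add]
      have h2 := hblk ((n+1) * q)
      push_cast
      push_cast at ih
      nlinarith [ih, h2]
  have hev : ∀ᶠ m in Filter.atTop, I - ε ≤ cesaro f m := by
    rw [Filter.eventually_atTop]
    refine ⟨max 1 (⌈((n:ℝ)+1) * (|I| + B) / ε⌉₊ + 1), fun m hm => ?_⟩
    have hm1 : 1 ≤ m := le_trans (le_max_left _ _) hm
    have hm0 : (0:ℝ) < (m:ℝ) := by exact_mod_cast hm1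
    set q : ℕ := m / (n+1) with hq
    set r : ℕ := m % (n+1) with hr
    have hqr : (n+1) * q + r = m := Nat.div_add_mod m (n+1)
    have hrlt : r < n + 1 := Nat.mod_lt _ (Nat.succ_pos n)
    have hsum : (m:ℝ) * I - ((n:ℝ)+1) * (|I| + B) ≤ ∑ ℓ ∈ Finset.range m, f ℓ := by
      have hdec : ∑ ℓ ∈ Finset.range m, f ℓ =
          ∑ ℓ ∈ Finset.range ((n+1) * q), f ℓ + ∑ i ∈ Finset.range r, f ((n+1) * q + i) := by
        rw [← hqr]
        exact Finset.sum_range_add f ((n+1)*q) r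
      have h1 := hmul q
      have h2 : -((r:ℝ)) * B ≤ ∑ i ∈ Finset.range r, f ((n+1) * q + i) := by
        have := Finset.card_nsmul_le_sum (Finset.range r)
          (fun i => f ((n+1)*q + i)) (-B) (fun i _ => (abs_le.1 (hB _)).1)
        rw [Finset.card_range, nsmul_eq_mul] at this
        linarith [this]
      have hcast : ((n+1) * q : ℕ) = ((m:ℝ) - (r:ℝ)) := by
        have : ((n+1) * q + r : ℕ) = (m : ℕ) := hqr
        push_cast [← this]; ring
      have hrR : (r:ℝ) ≤ (n:ℝ) + 1 := by exact_mod_cast Nat.le_of_lt hrlt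
      have hrR0 : (0:ℝ) ≤ (r:ℝ) := Nat.cast_nonneg r
      have hII : I ≤ |I| := le_abs_self I
      have hII' : -|I| ≤ I := neg_abs_le I
      rw [hdec]
      have h1' : ((m:ℝ) - (r:ℝ)) * I ≤ ∑ ℓ ∈ Finset.range ((n+1) * q), f ℓ := by
        have : (q:ℝ) * (((n:ℝ)+1) * I) = (((n+1)*q : ℕ) : ℝ) * I := by push_cast; ring
        rw [this, hcast] at h1
        exact h1
      nlinarith [h1', h2, abs_nonneg I]
    have hMε : ((n:ℝ)+1) * (|I| + B) ≤ ε * (m:ℝ) := by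
      have h1 : ((n:ℝ)+1) * (|I| + B) / ε ≤ (⌈((n:ℝ)+1) * (|I| + B) / ε⌉₊ : ℝ) := Nat.le_ceil _
      have h2 : (⌈((n:ℝ)+1) * (|I| + B) / ε⌉₊ + 1 : ℕ) ≤ m := le_trans (le_max_right _ _) hm
      have h2' : ((⌈((n:ℝ)+1) * (|I| + B) / ε⌉₊ : ℝ)) + 1 ≤ (m:ℝ) := by exact_mod_cast h2
      rw [div_le_iff₀ hε] at h1
      nlinarith
    rw [cesaro, le_div_iff₀ hm0]
    nlinarith [hsum, hMε]
  have := Filter.le_liminf_of_le hcob hev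
  linarith

lemma cesaro_neg (f : ℕ → ℝ) : cesaro (-f) = fun m => -(cesaro f m) := by
  funext m
  simp [cesaro, Finset.sum_neg_distrib, neg_div]

lemma real_iSup_neg (g : ℕ → ℝ) : (⨆ i, -(g i)) = -⨅ i, g i := by
  rw [iInf, Real.sInf_def, neg_neg, iSup]
  congr 1
  ext x
  simp only [Set.mem_range, Set.mem_neg]
  constructor
  · rintro ⟨i, rfl⟩; exact ⟨i, by ring⟩
  · rintro ⟨i, hi⟩; exact ⟨i, by linarith⟩

lemma real_iInf_neg (g : ℕ → ℝ) : (⨅ i, -(g i)) = -⨆ i, g i := by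
  have h := real_iSup_neg (fun i => -(g i))
  simp only [neg_neg] at h
  linarith

lemma lowWin_neg (f : ℕ → ℝ) : lowWin (-f) = -upWin f := by
  rw [lowWin_eq, upWin_eq]
  have hA : ∀ n k, winAvg (-f) n k = -(winAvg f n k) := by
    intro n k
    simp [winAvg, Finset.sum_neg_distrib, neg_div]
  have h1 : ∀ n, (⨅ k, winAvg (-f) n k) = -(⨆ k, winAvg f n k) := by
    intro n
    simp_rw [hA]
    exact real_iInf_neg _
  simp_rw [h1]
  exact real_iSup_neg _

lemma liminf_neg_real (u : ℕ → ℝ) :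
    Filter.liminf (fun n => -(u n)) Filter.atTop = -Filter.limsup u Filter.atTop := by
  rw [Filter.liminf_eq, Filter.limsup_eq, Real.sInf_def, neg_neg]
  congr 1
  ext a
  simp only [Set.mem_setOf_eq, Set.mem_neg]
  constructor
  · intro h; exact h.mono fun n hn => by linarith
  · intro h; exact h.mono fun n hn => by linarith

lemma limsup_neg_real (u : ℕ → ℝ) :
    Filter.limsup (fun n => -(u n)) Filter.atTop = -Filter.liminf u Filter.atTop := by
  have h := liminf_neg_real (fun n => -(u n))
  simp only [neg_neg] at h
  linarith

lemma periodic_window_sum (f : ℕ → ℝ) (m : ℕ) (hper : ∀ n, f (n + m) = f n) (k : ℕ) :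
    ∑ ℓ ∈ Finset.range m, f (k + ℓ) = ∑ r ∈ Finset.range m, f r := by
  induction k with
  | zero => simp
  | succ k ih =>
    rw [← ih]
    have h1 : ∑ ℓ ∈ Finset.range m, f (k + 1 + ℓ) = ∑ ℓ ∈ Finset.range m, f (k + (ℓ + 1)) := by
      apply Finset.sum_congr rfl
      intro ℓ _
      congr 1
      omega
    have h2 := Finset.sum_range_succ' (fun i => f (k + i)) m
    have h3 := Finset.sum_range_succ (fun i => f (k + i)) m
    rw [h1]
    have h4 : f (k + m) = f k := hper k
    have : ∑ ℓ ∈ Finset.range m, f (k + (ℓ + 1)) + f (k + 0) =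
        ∑ ℓ ∈ Finset.range m, f (k + ℓ) + f (k + m) := by rw [← h2, h3]
    simp only [Nat.add_zero] at this
    linarith

theorem stmt15 (f : ℕ → ℝ) (hf : IsGamble f) :
    (Filter.liminf f Filter.atTop ≤ lowWin f) ∧
    (lowWin f ≤ Filter.liminf (cesaro f) Filter.atTop) ∧
    (Filter.liminf (cesaro f) Filter.atTop ≤ Filter.limsup (cesaro f) Filter.atTop) ∧
    (Filter.limsup (cesaro f) Filter.atTop ≤ upWin f) ∧
    (upWin f ≤ Filter.limsup f Filter.atTop) ∧
    (∀ a : ℝ, Filter.Tendsto f Filter.atTop (nhds a) →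
      Filter.liminf f Filter.atTop = a ∧ lowWin f = a ∧
      Filter.liminf (cesaro f) Filter.atTop = a ∧
      Filter.limsup (cesaro f) Filter.atTop = a ∧
      upWin f = a ∧ Filter.limsup f Filter.atTop = a) ∧
    (∀ m : ℕ, 1 ≤ m → (∀ n : ℕ, f (n + m) = f n) →
      lowWin f = (∑ r ∈ Finset.range m, f r) / (m : ℝ) ∧
      Filter.liminf (cesaro f) Filter.atTop = (∑ r ∈ Finset.range m, f r) / (m : ℝ) ∧
      Filter.limsup (cesaro f) Filter.atTop = (∑ r ∈ Finset.range m, f r) / (m : ℝ) ∧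
      upWin f = (∑ r ∈ Finset.range m, f r) / (m : ℝ)) ∧
    ({n : ℕ | f n ≠ 0}.Finite →
      lowWin f = 0 ∧
      Filter.liminf (cesaro f) Filter.atTop = 0 ∧
      Filter.limsup (cesaro f) Filter.atTop = 0 ∧
      upWin f = 0) := by
  obtain ⟨⟨ub, hub⟩, ⟨lb, hlb⟩⟩ := hf
  set B : ℝ := max |ub| |lb| with hBdef
  have hB : ∀ n, |f n| ≤ B := by
    intro n
    rw [abs_le]
    constructor
    · have := hlb (Set.mem_range_self n)
      have : -|lb| ≤ f n := le_trans (neg_abs_le lb) this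
      exact le_trans (neg_le_neg (le_max_right _ _)) this
    · have := hub (Set.mem_range_self n)
      exact le_trans this (le_trans (le_abs_self ub) (le_max_left _ _))
  have hB0 : 0 ≤ B := le_trans (abs_nonneg _) (hB 0)
  have hBneg : ∀ n, |(-f) n| ≤ B := by intro n; rw [Pi.neg_apply, abs_neg]; exact hB n
  -- the five chain inequalities
  have h1 : Filter.liminf f Filter.atTop ≤ lowWin f := liminf_le_lowWin f hB
  have h2 : lowWin f ≤ Filter.liminf (cesaro f) Filter.atTop := lowWin_le_liminf_cesaro f hB
  have h3 : Filter.liminf (cesaro f) Filter.atTop ≤ Filter.limsup (cesaro f) Filter.atTop := by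
    apply Filter.liminf_le_limsup
    · exact Filter.isBoundedUnder_of ⟨B, fun (m : ℕ) => (abs_le.1 (cesaro_abs_le f hB0 hB m)).2⟩
    · exact Filter.isBoundedUnder_of ⟨-B, fun (m : ℕ) => (abs_le.1 (cesaro_abs_le f hB0 hB m)).1⟩
  have h4 : Filter.limsup (cesaro f) Filter.atTop ≤ upWin f := by
    have := lowWin_le_liminf_cesaro (-f) hBneg
    rw [lowWin_neg, cesaro_neg, liminf_neg_real] at this
    linarith
  have h5 : upWin f ≤ Filter.limsup f Filter.atTop := by
    have := liminf_le_lowWin (-f) hBneg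
    rw [lowWin_neg] at this
    have hneg : Filter.liminf (-f) Filter.atTop = -Filter.limsup f Filter.atTop := by
      have : (-f) = fun n => -(f n) := rfl
      rw [this, liminf_neg_real]
    rw [hneg] at this
    linarith
  have hTend : ∀ a : ℝ, Filter.Tendsto f Filter.atTop (nhds a) →
      Filter.liminf f Filter.atTop = a ∧ lowWin f = a ∧
      Filter.liminf (cesaro f) Filter.atTop = a ∧
      Filter.limsup (cesaro f) Filter.atTop = a ∧
      upWin f = a ∧ Filter.limsup f Filter.atTop = a := by
    intro a ha
    have hli : Filter.liminf f Filter.atTop = a := ha.liminf_eq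
    have hls : Filter.limsup f Filter.atTop = a := ha.limsup_eq
    refine ⟨hli, ?_, ?_, ?_, ?_, hls⟩
    · exact le_antisymm (by linarith) (by rw [← hli]; exact h1)
    · exact le_antisymm (by linarith) (by rw [← hli]; linarith)
    · exact le_antisymm (by rw [← hls]; linarith) (by linarith [h3, h2, h1, hli])
    · exact le_antisymm (by rw [← hls]; exact h5) (by linarith [h4, h3, h2, h1, hli])
  refine ⟨h1, h2, h3, h4, h5, hTend, ?_, ?_⟩
  · -- periodic case
    intro m hm hper
    set μ : ℝ := (∑ r ∈ Finset.range m, f r) / (m : ℝ) with hμ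
    obtain ⟨n, rfl⟩ : ∃ n, m = n + 1 := ⟨m - 1, by omega⟩
    have hwin : ∀ k, winAvg f n k = μ := by
      intro k
      rw [winAvg, periodic_window_sum f (n+1) hper k, hμ]
      push_cast
      ring_nf
    have hlow : μ ≤ lowWin f := by
      rw [lowWin_eq]
      have : (⨅ k, winAvg f n k) = μ := by simp_rw [hwin]; exact ciInf_const
      rw [← this]
      exact le_ciSup (infWin_bddAbove f hB) n
    have hup : upWin f ≤ μ := by
      rw [upWin_eq]
      have : (⨆ k, winAvg f n k) = μ := by simp_rw [hwin]; exact ciSup_const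
      rw [← this]
      exact ciInf_le (supWin_bddBelow f hB) n
    refine ⟨?_, ?_, ?_, ?_⟩ <;> apply le_antisymm <;> linarith
  · -- finite support case
    intro hfin
    obtain ⟨N, hN⟩ := hfin.bddAbove
    have hev : ∀ᶠ n in Filter.atTop, f n = 0 := by
      rw [Filter.eventually_atTop]
      refine ⟨N + 1, fun n hn => ?_⟩
      by_contra h
      have hmem : n ∈ {n : ℕ | f n ≠ 0} := h
      have := hN hmem
      omega
    have ht : Filter.Tendsto f Filter.atTop (nhds 0) := by
      refine Filter.Tendsto.congr' ?_ tendsto_const_nhds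
      exact hev.mono fun n hn => hn.symm
    obtain ⟨_, hlo, hlic, hlsc, hu, _⟩ := hTend 0 ht
    exact ⟨hlo, hlic, hlsc, hu⟩
end

section
/- Let 𝒫 be a finite group of permutations of a nonempty set X (a finite set of bijections of X, containing the identity, closed under composition and inverses). A functional A on the gambles on X is a weakly 𝒫-invariant coherent lower prevision (a coherent lower prevision satisfying A(f∘π) ≥ A(f) for all gambles f and all π ∈ 𝒫) if and only if there exists a coherent lower prevision L on X such that A(f) = (1/|𝒫|) Σ_{π∈𝒫} L(f∘π) for every gamble f on X. -/
lemma gamble_comp {X : Type*} {f : X → ℝ} (hf : IsGamble f) (π : X → X) :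
    IsGamble (f ∘ π) := by
  have hsub : Set.range (f ∘ π) ⊆ Set.range f := Set.range_comp_subset_range π f
  exact ⟨hf.1.mono hsub, hf.2.mono hsub⟩

lemma range_comp_surj {X : Type*} (f : X → ℝ) {π : X → X} (hπ : Function.Surjective π) :
    Set.range (f ∘ π) = Set.range f := by
  rw [Set.range_comp, Set.range_eq_univ.mpr hπ, Set.image_univ]

lemma gamble_add {X : Type*} {f g : X → ℝ} (hf : IsGamble f) (hg : IsGamble g) :
    IsGamble (f + g) := by
  obtain ⟨⟨M, hM⟩, ⟨m, hm⟩⟩ := hf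
  obtain ⟨⟨N, hN⟩, ⟨n, hn⟩⟩ := hg
  constructor
  · refine ⟨M + N, ?_⟩
    rintro _ ⟨x, rfl⟩
    exact add_le_add (hM ⟨x, rfl⟩) (hN ⟨x, rfl⟩)
  · refine ⟨m + n, ?_⟩
    rintro _ ⟨x, rfl⟩
    exact add_le_add (hm ⟨x, rfl⟩) (hn ⟨x, rfl⟩)

lemma gamble_smul {X : Type*} {f : X → ℝ} (hf : IsGamble f) {c : ℝ} (hc : 0 ≤ c) :
    IsGamble (c • f) := by
  obtain ⟨⟨M, hM⟩, ⟨m, hm⟩⟩ := hf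
  constructor
  · refine ⟨c * M, ?_⟩
    rintro _ ⟨x, rfl⟩
    exact mul_le_mul_of_nonneg_left (hM ⟨x, rfl⟩) hc
  · refine ⟨c * m, ?_⟩
    rintro _ ⟨x, rfl⟩
    exact mul_le_mul_of_nonneg_left (hm ⟨x, rfl⟩) hc

theorem stmt18 (X : Type*) [Nonempty X] (𝒢 : Finset (X → X))
    (hbij : ∀ π ∈ 𝒢, Function.Bijective π) (hid : id ∈ 𝒢)
    (hcomp : ∀ π ∈ 𝒢, ∀ σ ∈ 𝒢, π ∘ σ ∈ 𝒢)
    (hinvcl : ∀ π ∈ 𝒢, ∃ σ ∈ 𝒢, π ∘ σ = id ∧ σ ∘ π = id)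
    (A : (X → ℝ) → ℝ) :
    (IsCoherentLowerPrevision A ∧
      ∀ f : X → ℝ, IsGamble f → ∀ π ∈ 𝒢, A f ≤ A (f ∘ π)) ↔
    (∃ L : (X → ℝ) → ℝ, IsCoherentLowerPrevision L ∧
      ∀ f : X → ℝ, IsGamble f →
        A f = (∑ π ∈ 𝒢, L (f ∘ π)) / (𝒢.card : ℝ)) := by
  have hcard0 : (𝒢.card : ℝ) ≠ 0 := by
    have : 𝒢.Nonempty := ⟨id, hid⟩
    have := Finset.card_pos.mpr this
    positivity
  have hcardpos : (0 : ℝ) < 𝒢.card := by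
    have : 𝒢.Nonempty := ⟨id, hid⟩
    exact_mod_cast Finset.card_pos.mpr this
  constructor
  · rintro ⟨hA, hinv⟩
    refine ⟨A, hA, fun f hf => ?_⟩
    have hAinv : ∀ π ∈ 𝒢, A (f ∘ π) = A f := by
      intro π hπ
      obtain ⟨ρ, hρ, hπρ, hρπ⟩ := hinvcl π hπ
      have h1 : A f ≤ A (f ∘ π) := hinv f hf π hπ
      have h2 : A (f ∘ π) ≤ A ((f ∘ π) ∘ ρ) := hinv (f ∘ π) (gamble_comp hf π) ρ hρ
      have h3 : (f ∘ π) ∘ ρ = f := by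
        rw [Function.comp_assoc, hπρ, Function.comp_id]
      rw [h3] at h2
      linarith
    rw [Finset.sum_congr rfl (fun π hπ => hAinv π hπ), Finset.sum_const,
      nsmul_eq_mul, mul_comm, mul_div_assoc, div_self hcard0, mul_one]
  · rintro ⟨L, ⟨hL1, hL2, hL3⟩, hAL⟩
    have hAcoh : IsCoherentLowerPrevision A := by
      refine ⟨?_, ?_, ?_⟩
      · intro f hf
        rw [hAL f hf, le_div_iff₀ hcardpos, mul_comm]
        calc (𝒢.card : ℝ) * sInf (Set.range f)
            = ∑ _π ∈ 𝒢, sInf (Set.range f) := by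
              rw [Finset.sum_const, nsmul_eq_mul]
          _ ≤ ∑ π ∈ 𝒢, L (f ∘ π) := by
              refine Finset.sum_le_sum fun π hπ => ?_
              rw [← range_comp_surj f (hbij π hπ).2]
              exact hL1 _ (gamble_comp hf π)
      · intro f g hf hg
        rw [hAL f hf, hAL g hg, hAL (f + g) (gamble_add hf hg), ← add_div]
        have hsum : ∑ π ∈ 𝒢, L (f ∘ π) + ∑ π ∈ 𝒢, L (g ∘ π) ≤ ∑ π ∈ 𝒢, L ((f + g) ∘ π) := by
          rw [← Finset.sum_add_distrib]
          exact Finset.sum_le_sum fun π hπ => hL2 _ _ (gamble_comp hf π) (gamble_comp hg π)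
        exact div_le_div_of_nonneg_right hsum hcardpos.le
      · intro f hf c hc
        rw [hAL f hf, hAL (c • f) (gamble_smul hf hc)]
        have : ∀ π ∈ 𝒢, L ((c • f) ∘ π) = c * L (f ∘ π) := by
          intro π hπ
          have : (c • f) ∘ π = c • (f ∘ π) := rfl
          rw [this, hL3 _ (gamble_comp hf π) c hc]
        rw [Finset.sum_congr rfl this, ← Finset.mul_sum, mul_div_assoc]
    refine ⟨hAcoh, ?_⟩
    intro f hf π hπ
    obtain ⟨ρ, hρ, hπρ, hρπ⟩ := hinvcl π hπ
    have key : ∑ σ ∈ 𝒢, L ((f ∘ π) ∘ σ) = ∑ τ ∈ 𝒢, L (f ∘ τ) := by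
      refine Finset.sum_nbij' (i := fun σ => π ∘ σ) (j := fun τ => ρ ∘ τ)
        (fun σ hσ => hcomp π hπ σ hσ) (fun τ hτ => hcomp ρ hρ τ hτ)
        (fun σ _ => by show ρ ∘ (π ∘ σ) = σ; rw [← Function.comp_assoc, hρπ, Function.id_comp])
        (fun τ _ => by show π ∘ (ρ ∘ τ) = τ; rw [← Function.comp_assoc, hπρ, Function.id_comp])
        (fun σ _ => by show L ((f ∘ π) ∘ σ) = L (f ∘ (π ∘ σ)); rw [Function.comp_assoc])
    rw [hAL f hf, hAL (f ∘ π) (gamble_comp hf π), key]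
end
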